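/- For x ∈ ℝ, the function x ↦ 2√π · e^{x²} (1 + erf(x)) equals 2∫_0^∞ e^{xt} e^{−t²/4} dt; consequently x ↦ 2√π e^{x²}(1 − erf(x)) = 2∫_0^∞ e^{−xt} e^{−t²/4} dt is completely monotonic on ℝ: (−1)^n (d/dx)^n [2√π e^{x²}(1−erf(x))] ≥ 0 for all n ∈ ℕ and all x ∈ ℝ. -/

import Mathlib

open MeasureTheory

/-- The error function `erf(x) = (2/√π) ∫₀ˣ e^{-s²} ds`. -/
noncomputable def erf (x : ℝ) : ℝ :=
  (2 / Real.sqrt Real.pi) * ∫ s in (0:ℝ)..x, Real.exp (-s ^ 2)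

noncomputable def erfG (n : ℕ) (x : ℝ) : ℝ :=
  ∫ t in Set.Ioi (0:ℝ), t ^ n * Real.exp (-x * t) * Real.exp (-t ^ 2 / 4)

lemma erf_aux_integrable (c : ℝ) (n : ℕ) :
    IntegrableOn (fun t : ℝ => t ^ n * Real.exp (c * t) * Real.exp (-t ^ 2 / 4))
      (Set.Ioi 0) := by
  have base : IntegrableOn
      (fun t : ℝ => Real.exp (2 * c ^ 2) * (t ^ (n : ℝ) * Real.exp (-(1/8) * t ^ 2)))
      (Set.Ioi 0) :=
    (integrableOn_rpow_mul_exp_neg_mul_sq (by norm_num)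
      (by exact_mod_cast neg_one_lt_zero.trans_le (Nat.cast_nonneg n))).const_mul _
  refine Integrable.mono' base ?_ ?_
  · exact ((measurable_id.pow_const n).mul
      ((measurable_id.const_mul c).exp)).mul
      (((measurable_id.pow_const 2).neg.div_const 4).exp) |>.aestronglyMeasurable
  · filter_upwards [ae_restrict_mem measurableSet_Ioi] with t ht
    have htn : (0:ℝ) ≤ t ^ n := pow_nonneg (le_of_lt ht) n
    rw [Real.norm_eq_abs, abs_of_nonneg
      (mul_nonneg (mul_nonneg htn (Real.exp_pos _).le) (Real.exp_pos _).le), Real.rpow_natCast]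
    calc t ^ n * Real.exp (c * t) * Real.exp (-t ^ 2 / 4)
        = t ^ n * Real.exp (c * t + -t ^ 2 / 4) := by rw [mul_assoc, ← Real.exp_add]
      _ ≤ t ^ n * Real.exp (2 * c ^ 2 + -(1/8) * t ^ 2) := by
          apply mul_le_mul_of_nonneg_left (Real.exp_le_exp.2 ?_) htn
          nlinarith [sq_nonneg (t - 4 * c)]
      _ = Real.exp (2 * c ^ 2) * (t ^ n * Real.exp (-(1/8) * t ^ 2)) := by
          rw [Real.exp_add]; ring

lemma erfG_nonneg (n : ℕ) (x : ℝ) : 0 ≤ erfG n x :=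
  setIntegral_nonneg measurableSet_Ioi fun t ht =>
    mul_nonneg (mul_nonneg (pow_nonneg (le_of_lt ht) n) (Real.exp_pos _).le)
      (Real.exp_pos _).le

lemma erfG_hasDerivAt (n : ℕ) (x : ℝ) : HasDerivAt (erfG n) (-erfG (n+1) x) x := by
  have key := hasDerivAt_integral_of_dominated_loc_of_deriv_le
    (μ := volume.restrict (Set.Ioi (0:ℝ)))
    (F := fun (y : ℝ) (t : ℝ) => t ^ n * Real.exp (-y * t) * Real.exp (-t ^ 2 / 4))
    (F' := fun (y : ℝ) (t : ℝ) => -(t ^ (n+1) * Real.exp (-y * t) * Real.exp (-t ^ 2 / 4)))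
    (x₀ := x) (s := Metric.ball x 1)
    (bound := fun t => t ^ (n+1) * Real.exp ((|x| + 1) * t) * Real.exp (-t ^ 2 / 4))
    (Metric.ball_mem_nhds x one_pos)
    (Filter.Eventually.of_forall fun y =>
      (((measurable_id.pow_const n).mul
        ((measurable_id.const_mul (-y)).exp)).mul
        (((measurable_id.pow_const 2).neg.div_const 4).exp)).aestronglyMeasurable)
    (erf_aux_integrable (-x) n)
    ((((measurable_id.pow_const (n+1)).mul
        ((measurable_id.const_mul (-x)).exp)).mul
        (((measurable_id.pow_const 2).neg.div_const 4).exp)).neg.aestronglyMeasurable)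
    ?_ (erf_aux_integrable (|x| + 1) (n+1)) ?_
  · have h2 := key.2
    have : (∫ t in Set.Ioi (0:ℝ),
        -(t ^ (n+1) * Real.exp (-x * t) * Real.exp (-t ^ 2 / 4))) = -erfG (n+1) x := by
      rw [integral_neg]; rfl
    rw [this] at h2
    exact h2
  · filter_upwards [ae_restrict_mem measurableSet_Ioi] with t ht
    intro y hy
    have h1 : |y - x| < 1 := by simpa [Real.dist_eq] using hy
    have h2 : -y ≤ |x| + 1 := by
      nlinarith [neg_abs_le (y - x), neg_abs_le x, abs_nonneg (y - x)]
    rw [norm_neg, Real.norm_eq_abs, abs_of_nonneg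
      (mul_nonneg (mul_nonneg (pow_nonneg ht.le _) (Real.exp_pos _).le) (Real.exp_pos _).le)]
    have : Real.exp (-y * t) ≤ Real.exp ((|x| + 1) * t) :=
      Real.exp_le_exp.2 (mul_le_mul_of_nonneg_right h2 ht.le)
    have htn : (0:ℝ) ≤ t ^ (n+1) := pow_nonneg ht.le _
    have he : (0:ℝ) ≤ Real.exp (-t ^ 2 / 4) := (Real.exp_pos _).le
    nlinarith [mul_le_mul_of_nonneg_left this htn]
  · filter_upwards [ae_restrict_mem measurableSet_Ioi] with t ht
    intro y hy
    have hd : HasDerivAt (fun y : ℝ => -y * t) (-t) y := by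
      simpa using ((hasDerivAt_id y).neg.mul_const t)
    have h := ((hd.exp).const_mul ((t:ℝ) ^ n)).mul_const (Real.exp (-t ^ 2 / 4))
    convert h using 1
    · rfl
    ring

lemma erf_iteratedDeriv (n : ℕ) :
    iteratedDeriv n (fun x => 2 * erfG 0 x) = fun x => 2 * ((-1:ℝ) ^ n * erfG n x) := by
  induction n with
  | zero => simp [iteratedDeriv_zero]
  | succ n ih =>
    rw [iteratedDeriv_succ, ih]
    funext x
    have h := ((erfG_hasDerivAt n x).const_mul ((-1:ℝ) ^ n)).const_mul (2:ℝ)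
    rw [h.deriv]
    rw [pow_succ]
    ring

lemma erf_rep (x : ℝ) :
    (∫ t in Set.Ioi (0:ℝ), Real.exp (x * t) * Real.exp (-t ^ 2 / 4)) =
      Real.exp (x ^ 2) * (2 * (∫ s in (0:ℝ)..x, Real.exp (-s ^ 2)) + Real.sqrt Real.pi) := by
  have hint : Integrable (fun v : ℝ => Real.exp (-v ^ 2)) := by
    simpa using integrable_exp_neg_mul_sq one_pos
  have step1 : ∀ t : ℝ, Real.exp (x * t) * Real.exp (-t ^ 2 / 4) =
      Real.exp (x ^ 2) * Real.exp (-((1/2) * t - x) ^ 2) := by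
    intro t
    rw [← Real.exp_add, ← Real.exp_add]
    congr 1
    ring
  simp_rw [step1]
  rw [integral_const_mul]
  have step2 : (∫ t in Set.Ioi (0:ℝ), Real.exp (-((1/2) * t - x) ^ 2)) =
      2 * ∫ u in Set.Ioi (0:ℝ), Real.exp (-(u - x) ^ 2) := by
    rw [integral_comp_mul_left_Ioi (fun u => Real.exp (-(u - x) ^ 2)) 0
      (by norm_num : (0:ℝ) < 1/2)]
    norm_num
  rw [step2]
  have step3 : (∫ u in Set.Ioi (0:ℝ), Real.exp (-(u - x) ^ 2)) =
      ∫ v in Set.Ioi (-x), Real.exp (-v ^ 2) := by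
    have h := (measurePreserving_add_right volume x).setIntegral_preimage_emb
      ((Homeomorph.addRight x).isClosedEmbedding.measurableEmbedding)
      (fun u => Real.exp (-(u - x) ^ 2)) (Set.Ioi 0)
    have hp : (fun v : ℝ => v + x) ⁻¹' Set.Ioi 0 = Set.Ioi (-x) := by
      rw [Set.preimage_add_const_Ioi]; ring_nf
    rw [hp] at h
    rw [← h]
    congr 1
    funext v
    rw [add_sub_cancel_right]
  rw [step3]
  have h0 : (∫ v in Set.Ioi (0:ℝ), Real.exp (-v ^ 2)) = Real.sqrt Real.pi / 2 := by
    simpa using integral_gaussian_Ioi 1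
  have hIic : ∀ a : ℝ, (∫ v in Set.Iic a, Real.exp (-v ^ 2)) +
      (∫ v in Set.Ioi a, Real.exp (-v ^ 2)) = Real.sqrt Real.pi := by
    intro a
    rw [intervalIntegral.integral_Iic_add_Ioi hint.integrableOn hint.integrableOn]
    simpa using integral_gaussian 1
  have hsub := intervalIntegral.integral_Iic_sub_Iic (f := fun v : ℝ => Real.exp (-v ^ 2))
    (a := -x) (b := (0:ℝ)) hint.integrableOn hint.integrableOn
  have step4 : (∫ v in (-x)..(0:ℝ), Real.exp (-v ^ 2)) =
      ∫ s in (0:ℝ)..x, Real.exp (-s ^ 2) := by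
    have h := intervalIntegral.integral_comp_neg (a := (0:ℝ)) (b := x)
      (fun v => Real.exp (-v ^ 2))
    simp only [neg_sq, neg_zero] at h
    exact h.symm
  have := hIic (-x)
  have := hIic 0
  have hIoi : (∫ v in Set.Ioi (-x), Real.exp (-v ^ 2)) =
      (∫ s in (0:ℝ)..x, Real.exp (-s ^ 2)) + Real.sqrt Real.pi / 2 := by
    rw [← step4]
    linarith
  rw [hIoi]
  ring

lemma erf_neg (x : ℝ) : erf (-x) = -erf x := by
  unfold erf
  have h1 : (∫ s in (0:ℝ)..(-x), Real.exp (-s ^ 2)) = -∫ s in (-x)..(0:ℝ), Real.exp (-s ^ 2) :=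
    intervalIntegral.integral_symm _ _
  have h2 : (∫ v in (-x)..(0:ℝ), Real.exp (-v ^ 2)) =
      ∫ s in (0:ℝ)..x, Real.exp (-s ^ 2) := by
    have h := intervalIntegral.integral_comp_neg (a := (0:ℝ)) (b := x)
      (fun v => Real.exp (-v ^ 2))
    simp only [neg_sq, neg_zero] at h
    exact h.symm
  rw [h1, h2]
  ring

/-- Integral representations of `2√π e^{x²}(1 ± erf x)` and complete monotonicity
of `x ↦ 2√π e^{x²}(1 - erf x)` on `ℝ`. -/
theorem erf_completely_monotonic :
    (∀ x : ℝ, 2 * Real.sqrt Real.pi * Real.exp (x ^ 2) * (1 + erf x) =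
        2 * ∫ t in Set.Ioi (0:ℝ), Real.exp (x * t) * Real.exp (-t ^ 2 / 4)) ∧
      (∀ x : ℝ, 2 * Real.sqrt Real.pi * Real.exp (x ^ 2) * (1 - erf x) =
        2 * ∫ t in Set.Ioi (0:ℝ), Real.exp (-x * t) * Real.exp (-t ^ 2 / 4)) ∧
      ∀ n : ℕ, ∀ x : ℝ,
        0 ≤ (-1 : ℝ) ^ n *
          iteratedDeriv n (fun x => 2 * Real.sqrt Real.pi * Real.exp (x ^ 2) * (1 - erf x)) x := by
  have hπ : (0:ℝ) < Real.sqrt Real.pi := Real.sqrt_pos.2 Real.pi_pos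
  have part1 : ∀ x : ℝ, 2 * Real.sqrt Real.pi * Real.exp (x ^ 2) * (1 + erf x) =
      2 * ∫ t in Set.Ioi (0:ℝ), Real.exp (x * t) * Real.exp (-t ^ 2 / 4) := by
    intro x
    rw [erf_rep x, erf]
    field_simp
    ring
  have part2 : ∀ x : ℝ, 2 * Real.sqrt Real.pi * Real.exp (x ^ 2) * (1 - erf x) =
      2 * ∫ t in Set.Ioi (0:ℝ), Real.exp (-x * t) * Real.exp (-t ^ 2 / 4) := by
    intro x
    have h := part1 (-x)
    rw [erf_neg, neg_sq] at h
    rw [← h]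
    ring
  refine ⟨part1, part2, ?_⟩
  intro n x
  have hfun : (fun x => 2 * Real.sqrt Real.pi * Real.exp (x ^ 2) * (1 - erf x)) =
      fun x => 2 * erfG 0 x := by
    funext y
    rw [part2 y]
    unfold erfG
    congr 1
    congr 1
    funext t
    rw [pow_zero, one_mul]
  rw [hfun, erf_iteratedDeriv n]
  have h : ((-1:ℝ) ^ n) * ((-1:ℝ) ^ n) = 1 := by
    rw [← pow_add]
    exact Even.neg_one_pow ⟨n, rfl⟩
  have hG := erfG_nonneg n x
  show 0 ≤ (-1:ℝ) ^ n * (2 * ((-1:ℝ) ^ n * erfG n x))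
  rw [show (-1:ℝ) ^ n * (2 * ((-1:ℝ) ^ n * erfG n x)) =
    2 * (((-1:ℝ) ^ n * (-1:ℝ) ^ n) * erfG n x) from by ring, h, one_mul]
  linarith
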